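/- Let n ≥ 2 and let T ∈ U(n,1) be a vertical translation, i.e., a unipotent element with (T − 1)² = 0 and T ≠ 1. Then T is a product of four involutions in U(n,1); that is, there exist involutions J₁, J₂, J₃, J₄ ∈ U(n,1) with T = J₁J₂J₃J₄. -/

import Mathlib

open Matrix

/-- The signature matrix `J = diag(-1, 1, …, 1)` of the Hermitian form on `ℂ^{n,1}`. -/
noncomputable def Jform (n : ℕ) : Matrix (Fin (n + 1)) (Fin (n + 1)) ℂ :=
  Matrix.diagonal (fun i => if i = 0 then (-1 : ℂ) else 1)

/-- Membership in `U(n,1)`: `Aᴴ J A = J`. -/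
def memU1 (n : ℕ) (A : Matrix (Fin (n + 1)) (Fin (n + 1)) ℂ) : Prop :=
  Aᴴ * Jform n * A = Jform n

/-- Membership in `SU(n,1)`: `Aᴴ J A = J` and `det A = 1`. -/
def memSU1 (n : ℕ) (A : Matrix (Fin (n + 1)) (Fin (n + 1)) ℂ) : Prop :=
  Aᴴ * Jform n * A = Jform n ∧ A.det = 1

noncomputable section
namespace VTaux

variable {n : ℕ}

def dv (n : ℕ) : Fin (n+1) → ℂ := fun i => if i = 0 then (-1:ℂ) else 1

lemma Jform_eq : Jform n = Matrix.diagonal (dv n) := rfl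

lemma dv_succ (i : Fin n) : dv n i.succ = 1 := by simp [dv, Fin.succ_ne_zero]

lemma dv_star (k : Fin (n+1)) : star (dv n k) = dv n k := by
  unfold dv; split <;> simp

lemma dv_mul_self (k : Fin (n+1)) : dv n k * dv n k = 1 := by
  unfold dv; split <;> norm_num

lemma dv_ne_zero (k : Fin (n+1)) : dv n k ≠ 0 := by
  unfold dv; split <;> norm_num

lemma J_mul_J : Jform n * Jform n = 1 := by
  rw [Jform_eq, diagonal_mul_diagonal]
  have h : (fun i => dv n i * dv n i) = fun _ => (1:ℂ) := funext dv_mul_self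
  rw [h, diagonal_one]

/-- The hermitian pairing `xᴴ J y`. -/
def B (x y : Fin (n+1) → ℂ) : ℂ := ∑ k, star (x k) * (dv n k * y k)

/-- The rank one matrix `x yᴴ J`. -/
def Sm (x y : Fin (n+1) → ℂ) : Matrix (Fin (n+1)) (Fin (n+1)) ℂ :=
  vecMulVec x (fun k => star (y k) * dv n k)

lemma Sm_apply (x y : Fin (n+1) → ℂ) (i j : Fin (n+1)) :
    Sm x y i j = x i * (star (y j) * dv n j) := rfl

lemma Sm_mul_Sm (x y z w : Fin (n+1) → ℂ) : Sm x y * Sm z w = B y z • Sm x w := by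
  ext i j
  simp only [Sm, B, Matrix.mul_apply, Matrix.vecMulVec_apply, Matrix.smul_apply,
    smul_eq_mul, Finset.sum_mul]
  exact Finset.sum_congr rfl fun k _ => by ring

lemma Sm_conjT (x y : Fin (n+1) → ℂ) : (Sm x y)ᴴ = Jform n * Sm y x * Jform n := by
  ext i j
  simp only [Sm, conjTranspose_apply, vecMulVec_apply, Jform_eq, diagonal_mul, mul_diagonal]
  rw [star_mul', star_mul', star_star, dv_star]
  linear_combination (-(star (x j) * y i * dv n i)) * dv_mul_self j

lemma Bstar (x y : Fin (n+1) → ℂ) : B y x = star (B x y) := by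
  rw [B, B, star_sum]
  exact Finset.sum_congr rfl fun k _ => by
    rw [star_mul', star_mul', star_star, dv_star]; ring

/-- Generic element of the algebra spanned by `1, Sm v v, Sm v r, Sm r v, Sm r r`. -/
def M (v r : Fin (n+1) → ℂ) (e a b c d : ℂ) : Matrix (Fin (n+1)) (Fin (n+1)) ℂ :=
  e • 1 + a • Sm v v + b • Sm v r + c • Sm r v + d • Sm r r

lemma M_one (v r : Fin (n+1) → ℂ) : M v r 1 0 0 0 0 = 1 := by simp [M]

lemma M_congr (v r : Fin (n+1) → ℂ) {e a b c d e' a' b' c' d' : ℂ}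
    (h1 : e = e') (h2 : a = a') (h3 : b = b') (h4 : c = c') (h5 : d = d') :
    M v r e a b c d = M v r e' a' b' c' d' := by rw [h1, h2, h3, h4, h5]

lemma M_mul_M (v r : Fin (n+1) → ℂ) (hvv : B v v = 0) (hvr : B v r = 0)
    (hrv : B r v = 0) (hrr : B r r = 1)
    (e1 a1 b1 c1 d1 e2 a2 b2 c2 d2 : ℂ) :
    M v r e1 a1 b1 c1 d1 * M v r e2 a2 b2 c2 d2 =
      M v r (e1*e2) (e1*a2 + a1*e2 + b1*c2) (e1*b2 + b1*e2 + b1*d2)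
        (e1*c2 + c1*e2 + d1*c2) (e1*d2 + d1*e2 + d1*d2) := by
  simp only [M, Matrix.add_mul, Matrix.mul_add, Matrix.smul_mul, Matrix.mul_smul,
    Matrix.one_mul, Matrix.mul_one, Sm_mul_Sm, hvv, hvr, hrv, hrr,
    zero_smul, one_smul, smul_smul, smul_zero, mul_zero, mul_one,
    add_zero, zero_add, smul_add]
  module

lemma M_conjT (v r : Fin (n+1) → ℂ) (e a b c d : ℂ) :
    (M v r e a b c d)ᴴ =
      Jform n * M v r (star e) (star a) (star c) (star b) (star d) * Jform n := by
  simp only [M, conjTranspose_add, conjTranspose_smul, conjTranspose_one, Sm_conjT,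
    Matrix.mul_add, Matrix.add_mul, Matrix.mul_smul, Matrix.smul_mul, Matrix.mul_one,
    Matrix.one_mul, J_mul_J]
  abel

lemma M_involution (v r : Fin (n+1) → ℂ) (hvv : B v v = 0) (hvr : B v r = 0)
    (hrv : B r v = 0) (hrr : B r r = 1) (e a b c d : ℂ)
    (h1 : e*e = 1) (h2 : e*a+a*e+b*c = 0) (h3 : e*b+b*e+b*d = 0)
    (h4 : e*c+c*e+d*c = 0) (h5 : e*d+d*e+d*d = 0)
    (he : star e = e) (ha : star a = a) (hd : star d = d) (hcb : star c = b) :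
    M v r e a b c d * M v r e a b c d = 1 ∧ memU1 n (M v r e a b c d) := by
  have hsq : M v r e a b c d * M v r e a b c d = 1 := by
    rw [M_mul_M v r hvv hvr hrv hrr, h1, h2, h3, h4, h5, M_one]
  refine ⟨hsq, ?_⟩
  have hbc : star b = c := by rw [← hcb, star_star]
  unfold memU1
  rw [M_conjT, he, ha, hd, hcb, hbc]
  simp only [Matrix.mul_assoc]
  rw [show Jform n * (Jform n * M v r e a b c d) = M v r e a b c d from by
        rw [← Matrix.mul_assoc, J_mul_J, Matrix.one_mul]]
  rw [hsq, Matrix.mul_one]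

lemma sum_star_mul_self_eq_zero {m : ℕ} (f : Fin m → ℂ) (h : ∑ i, star (f i) * f i = 0) :
    ∀ i, f i = 0 := by
  have h2 : ((∑ i, Complex.normSq (f i) : ℝ) : ℂ) = 0 := by
    push_cast
    rw [← h]
    exact Finset.sum_congr rfl fun i _ => by
      rw [Complex.normSq_eq_conj_mul_self]; rfl
  have h' : ∑ i, Complex.normSq (f i) = 0 := by exact_mod_cast h2
  intro i
  have := (Finset.sum_eq_zero_iff_of_nonneg
    (fun i _ => Complex.normSq_nonneg (f i))).mp h' i (Finset.mem_univ i)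
  exact Complex.normSq_eq_zero.mp this

lemma B_split (x y : Fin (n+1) → ℂ) :
    B x y = -(star (x 0) * y 0) + ∑ i : Fin n, star (x i.succ) * y i.succ := by
  rw [B, Fin.sum_univ_succ]
  congr 1
  · simp [dv]
  · exact Finset.sum_congr rfl fun i _ => by rw [dv_succ, one_mul]

lemma vec_eq_zero (x : Fin (n+1) → ℂ) (h0 : x 0 = 0) (hs : ∀ i : Fin n, x i.succ = 0) :
    x = 0 := by
  funext k
  rcases Fin.eq_zero_or_eq_succ k with hk | ⟨i, hk⟩
  · rw [hk]; exact h0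
  · rw [hk]; exact hs i

lemma B_self_zero_of (x : Fin (n+1) → ℂ) (hx : B x x = 0) (h0 : x 0 = 0) : x = 0 := by
  have hsplit := B_split x x
  rw [hx, h0] at hsplit
  simp only [star_zero, zero_mul, mul_zero, neg_zero, zero_add] at hsplit
  exact vec_eq_zero x h0 (sum_star_mul_self_eq_zero (fun i => x i.succ) hsplit.symm)

lemma null_parallel (x y : Fin (n+1) → ℂ) (hx : B x x = 0) (hy : B y y = 0)
    (hxy : B x y = 0) (hx0 : x ≠ 0) : ∃ c : ℂ, y = c • x := by
  have hyx : B y x = 0 := by rw [Bstar, hxy, star_zero]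
  have hx00 : x 0 ≠ 0 := fun h0 => hx0 (B_self_zero_of x hx h0)
  set cc : ℂ := y 0 / x 0 with hccdef
  set z : Fin (n+1) → ℂ := fun k => y k - cc * x k with hzdef
  have hz0 : z 0 = 0 := by
    simp only [hzdef]
    rw [hccdef, div_mul_cancel₀ _ hx00, sub_self]
  have hBzz : B z z = 0 := by
    have expand : B z z = B y y - cc * B y x - star cc * B x y + star cc * cc * B x x := by
      simp only [B, hzdef, star_sub, star_mul']
      rw [Finset.mul_sum, Finset.mul_sum, Finset.mul_sum,
        ← Finset.sum_sub_distrib, ← Finset.sum_sub_distrib, ← Finset.sum_add_distrib]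
      exact Finset.sum_congr rfl fun k _ => by ring
    rw [hx, hy, hxy, hyx] at expand
    simpa using expand
  have hz := B_self_zero_of z hBzz hz0
  refine ⟨cc, funext fun k => ?_⟩
  have hk : z k = 0 := by rw [hz]; rfl
  simp only [hzdef] at hk
  have : y k = cc * x k := by linear_combination hk
  simpa using this

lemma exists_w (hn : 2 ≤ n) (v : Fin (n+1) → ℂ) :
    ∃ w : Fin (n+1) → ℂ, w ≠ 0 ∧ (∑ k, star (v k) * w k) = 0 ∧ w 0 = 0 := by
  let φ : (Fin (n+1) → ℂ) →ₗ[ℂ] ℂ × ℂ :=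
    { toFun := fun x => (∑ k, star (v k) * x k, x 0)
      map_add' := fun x y => by
        simp only [Pi.add_apply, mul_add, Finset.sum_add_distrib, Prod.mk_add_mk]
      map_smul' := fun m x => by
        simp only [Pi.smul_apply, smul_eq_mul, RingHom.id_apply, Prod.smul_mk,
          Finset.mul_sum]
        congr 1
        exact Finset.sum_congr rfl fun k _ => by ring }
  have hk : LinearMap.ker φ ≠ ⊥ := by
    intro hbot
    have h1 := LinearMap.finrank_range_add_finrank_ker φ
    rw [hbot, finrank_bot, add_zero] at h1
    have h2 : Module.finrank ℂ (Fin (n+1) → ℂ) = n + 1 := by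
      simp [Module.finrank_pi]
    have h3 := Submodule.finrank_le (LinearMap.range φ)
    have h4 : Module.finrank ℂ (ℂ × ℂ) = 2 := by simp
    omega
  obtain ⟨w, hwmem, hwne⟩ := (Submodule.ne_bot_iff _).mp hk
  have h0 := LinearMap.mem_ker.mp hwmem
  exact ⟨w, hwne, by simpa [φ] using congrArg Prod.fst h0, by simpa [φ] using congrArg Prod.snd h0⟩

/-- Existence of a positive unit vector `J`-orthogonal to `v`. -/
lemma exists_r (hn : 2 ≤ n) (v : Fin (n+1) → ℂ) :
    ∃ r : Fin (n+1) → ℂ, B r r = 1 ∧ B r v = 0 ∧ B v r = 0 := by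
  obtain ⟨w, hwne, hw1, hw2⟩ := exists_w hn v
  set S : ℝ := ∑ k, Complex.normSq (w k) with hSdef
  have hSpos : 0 < S := by
    obtain ⟨k, hk⟩ : ∃ k, w k ≠ 0 := by
      by_contra hq; push_neg at hq; exact hwne (funext fun k => hq k)
    exact Finset.sum_pos' (fun i _ => Complex.normSq_nonneg _)
      ⟨k, Finset.mem_univ k, Complex.normSq_pos.mpr hk⟩
  set s : ℝ := Real.sqrt S with hsdef
  have hs : s * s = S := Real.mul_self_sqrt hSpos.le
  have hsne : (s:ℂ) ≠ 0 := by
    have h : s ≠ 0 := ne_of_gt (Real.sqrt_pos.mpr hSpos)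
    exact Complex.ofReal_ne_zero.mpr h
  set r : Fin (n+1) → ℂ := fun k => (s:ℂ)⁻¹ * w k with hrdef
  have hstar_s : star ((s:ℂ)⁻¹) = (s:ℂ)⁻¹ := by
    rw [star_inv₀, Complex.star_def, Complex.conj_ofReal]
  have hrr : B r r = 1 := by
    have hterm : ∀ k : Fin (n+1), star (r k) * (dv n k * r k)
        = (s:ℂ)⁻¹ * (s:ℂ)⁻¹ * ((Complex.normSq (w k) : ℝ) : ℂ) := by
      intro k
      rcases eq_or_ne k 0 with hk | hk
      · subst hk; simp [hrdef, hw2]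
      · simp only [hrdef, dv, if_neg hk, one_mul, star_mul', hstar_s,
          Complex.normSq_eq_conj_mul_self, Complex.star_def]
        ring
    rw [B, Finset.sum_congr rfl fun k _ => hterm k, ← Finset.mul_sum]
    have hsum : (∑ k, ((Complex.normSq (w k) : ℝ) : ℂ)) = ((S:ℝ):ℂ) := by
      rw [hSdef]; push_cast; rfl
    rw [hsum, ← hs]
    push_cast
    field_simp
  have hrv : B r v = 0 := by
    have hterm : ∀ k : Fin (n+1), star (r k) * (dv n k * v k)
        = (s:ℂ)⁻¹ * (star (w k) * v k) := by
      intro k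
      rcases eq_or_ne k 0 with hk | hk
      · subst hk; simp [hrdef, hw2]
      · simp only [hrdef, dv, if_neg hk, one_mul, star_mul', hstar_s]
        ring
    rw [B, Finset.sum_congr rfl fun k _ => hterm k, ← Finset.mul_sum]
    have h0 : (∑ k, star (w k) * v k) = 0 := by
      have h := congrArg star hw1
      rw [star_sum, star_zero] at h
      rw [← h]
      exact Finset.sum_congr rfl fun k _ => by rw [star_mul', star_star]; ring
    rw [h0, mul_zero]
  have hvr : B v r = 0 := by rw [Bstar, hrv, star_zero]
  exact ⟨r, hrr, hrv, hvr⟩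

end VTaux
end

open VTaux

/-- A vertical translation (unipotent with `(T-1)² = 0`, `T ≠ 1`) in `U(n,1)`, `n ≥ 2`,
is a product of four involutions in `U(n,1)`. -/
theorem vertical_translation_product_four_involutions
    (n : ℕ) (hn : 2 ≤ n)
    (T : Matrix (Fin (n + 1)) (Fin (n + 1)) ℂ)
    (hT : memU1 n T)
    (hunip : (T - 1) ^ 2 = 0) (hne : T ≠ 1) :
    ∃ J₁ J₂ J₃ J₄ : Matrix (Fin (n + 1)) (Fin (n + 1)) ℂ,
      memU1 n J₁ ∧ memU1 n J₂ ∧ memU1 n J₃ ∧ memU1 n J₄ ∧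
      J₁ * J₁ = 1 ∧ J₂ * J₂ = 1 ∧ J₃ * J₃ = 1 ∧ J₄ * J₄ = 1 ∧
      T = J₁ * J₂ * J₃ * J₄ := by
  classical
  have hN2 : (T - 1) * (T - 1) = 0 := by rw [← pow_two]; exact hunip
  have hNne : T - 1 ≠ 0 := fun h => hne (sub_eq_zero.mp h)
  have hTr : T * (1 - (T - 1)) = 1 := by
    have h : T * (1 - (T - 1)) = 1 - (T - 1) * (T - 1) := by noncomm_ring
    rw [h, hN2, sub_zero]
  have hTH : Tᴴ = Jform n * (1 - (T - 1)) * Jform n := by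
    have h2 : Tᴴ * Jform n = Jform n * (1 - (T - 1)) := by
      calc Tᴴ * Jform n = Tᴴ * Jform n * (T * (1 - (T - 1))) := by
            rw [hTr, Matrix.mul_one]
        _ = (Tᴴ * Jform n * T) * (1 - (T - 1)) := by
            rw [Matrix.mul_assoc (Tᴴ * Jform n)]
        _ = Jform n * (1 - (T - 1)) := by
            rw [show Tᴴ * Jform n * T = Jform n from hT]
    calc Tᴴ = Tᴴ * (Jform n * Jform n) := by rw [J_mul_J, Matrix.mul_one]
      _ = (Tᴴ * Jform n) * Jform n := by rw [Matrix.mul_assoc]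
      _ = Jform n * (1 - (T - 1)) * Jform n := by rw [h2]
  have hNH : (T - 1)ᴴ = -(Jform n * (T - 1) * Jform n) := by
    rw [conjTranspose_sub, conjTranspose_one, hTH, Matrix.mul_sub, Matrix.sub_mul,
      Matrix.mul_one, J_mul_J]
    abel
  have hBN : (T - 1)ᴴ * (Jform n * (T - 1)) = 0 := by
    rw [hNH]
    simp only [Matrix.neg_mul, Matrix.mul_assoc]
    rw [← Matrix.mul_assoc (Jform n) (Jform n) (T - 1), J_mul_J, Matrix.one_mul, hN2,
      Matrix.mul_zero, neg_zero]
  have hcolB : ∀ i j, B (fun k => (T - 1) k i) (fun k => (T - 1) k j) = 0 := by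
    intro i j
    have h := congrFun (congrFun hBN i) j
    rw [Matrix.zero_apply, Matrix.mul_apply] at h
    rw [B, ← h]
    exact Finset.sum_congr rfl fun k _ => by
      rw [Matrix.conjTranspose_apply, Jform_eq, Matrix.diagonal_mul]
  obtain ⟨i₀, j₀, hij⟩ : ∃ i j, (T - 1) i j ≠ 0 := by
    by_contra h
    push_neg at h
    exact hNne (by ext i j; simpa using h i j)
  obtain ⟨v, hvdef⟩ : ∃ v : Fin (n+1) → ℂ, v = fun k => (T - 1) k j₀ := ⟨_, rfl⟩
  have hvi0 : v i₀ ≠ 0 := by rw [hvdef]; exact hij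
  have hvne : v ≠ 0 := fun h => hvi0 (by rw [h]; rfl)
  have hBvv : B v v = 0 := by rw [hvdef]; exact hcolB j₀ j₀
  have hcols : ∀ j, ∃ c : ℂ, (fun k => (T - 1) k j) = c • v := by
    intro j
    refine null_parallel v _ hBvv ?_ ?_ hvne
    · exact hcolB j j
    · rw [hvdef]; exact hcolB j₀ j
  choose c hc using hcols
  have hc' : ∀ j k, (T - 1) k j = c j * v k := by
    intro j k
    have := congrFun (hc j) k
    simpa using this
  have hent : ∀ i j, star ((T - 1) j i) = -(dv n i * (T - 1) i j * dv n j) := by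
    intro i j
    have h := congrFun (congrFun hNH i) j
    rw [Matrix.conjTranspose_apply, Matrix.neg_apply] at h
    have hJJ : (Jform n * (T - 1) * Jform n) i j = dv n i * (T - 1) i j * dv n j := by
      rw [Jform_eq, Matrix.mul_diagonal, Matrix.diagonal_mul]
    rw [h, hJJ]
  obtain ⟨lam, hlamdef⟩ : ∃ l : ℂ, l = -(star (c i₀)) * dv n i₀ / v i₀ := ⟨_, rfl⟩
  have hc2 : ∀ j, c j = lam * (star (v j) * dv n j) := by
    intro j
    have h : star (c i₀) * star (v j) = -(dv n i₀ * (c j * v i₀) * dv n j) := by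
      have h0 := hent i₀ j
      rw [hc' i₀ j, hc' j i₀, star_mul'] at h0
      exact h0
    have hdi := dv_mul_self i₀
    have hdj := dv_mul_self j
    have hkey : c j * v i₀ = -(star (c i₀)) * dv n i₀ * (star (v j) * dv n j) := by
      linear_combination (dv n i₀ * dv n j) * h - (c j * v i₀ * dv n j * dv n j) * hdi
        - (c j * v i₀) * hdj
    rw [hlamdef, div_mul_eq_mul_div, eq_div_iff hvi0]
    linear_combination hkey
  have hstarlam : star lam = -lam := by
    have h := hent i₀ i₀
    rw [hc' i₀ i₀, hc2 i₀] at h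
    simp only [star_mul', star_star, dv_star] at h
    have hd := dv_mul_self i₀
    have hkey : (star lam + lam) * (v i₀ * star (v i₀) * dv n i₀) = 0 := by
      linear_combination h - (lam * v i₀ * star (v i₀) * dv n i₀) * hd
    rcases mul_eq_zero.mp hkey with h1 | h2
    · exact eq_neg_of_add_eq_zero_left h1
    · exact absurd h2
        (mul_ne_zero (mul_ne_zero hvi0 (star_ne_zero.mpr hvi0)) (dv_ne_zero i₀))
  obtain ⟨r, hBrr, hBrv, hBvr⟩ := exists_r hn v
  have hMT : M v r 1 lam 0 0 0 = 1 + lam • Sm v v := by simp [M]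
  have hNlam : T - 1 = lam • Sm v v := by
    ext i j
    rw [Matrix.smul_apply, Sm_apply, hc' j i, hc2 j, smul_eq_mul]
    ring
  have hTM : T = M v r 1 lam 0 0 0 := by
    rw [hMT, ← hNlam]
    abel
  obtain ⟨hs1, hU1⟩ := M_involution v r hBvv hBvr hBrv hBrr 1 (-2) 2 2 (-2)
    (by norm_num) (by norm_num) (by norm_num) (by norm_num) (by norm_num)
    (by simp) (by simp) (by simp) (by simp)
  obtain ⟨hs2, hU2⟩ := M_involution v r hBvv hBvr hBrv hBrr
    1 (-2 + lam^2/8) (2 - lam/2) (2 + lam/2) (-2)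
    (by norm_num) (by ring) (by ring) (by ring) (by ring)
    (by simp)
    (by simp only [star_add, star_neg, star_div₀, star_pow, star_ofNat, hstarlam]; try ring)
    (by simp)
    (by simp only [star_add, star_div₀, star_ofNat, hstarlam]; try ring)
  obtain ⟨hs3, hU3⟩ := M_involution v r hBvv hBvr hBrv hBrr
    1 (lam^2/8) (-lam/2) (lam/2) (-2)
    (by norm_num) (by ring) (by ring) (by ring) (by ring)
    (by simp)
    (by simp only [star_div₀, star_pow, star_ofNat, hstarlam]; try ring)
    (by simp)
    (by simp only [star_div₀, star_ofNat, hstarlam]; try ring)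
  obtain ⟨hs4, hU4⟩ := M_involution v r hBvv hBvr hBrv hBrr 1 0 0 0 (-2)
    (by norm_num) (by ring) (by ring) (by ring) (by norm_num)
    (by simp) (by simp) (by simp) (by simp)
  refine ⟨_, _, _, _, hU1, hU2, hU3, hU4, hs1, hs2, hs3, hs4, ?_⟩
  rw [hTM]
  simp only [M_mul_M v r hBvv hBvr hBrv hBrr]
  symm
  exact M_congr v r (by ring) (by ring) (by ring) (by ring) (by ring)
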